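/- Let N be an odd natural number with N ≥ 1. Then for every real number r it holds that ∑_{j=0}^{N−1} r^j ≥ 1/2 + 1/(N+1). -/
import Mathlib

lemma key_pow_ineq (N : ℕ) (hne : N ≠ 2) : ((N:ℝ)+3)^N ≤ 2*((N:ℝ)+1)*(N:ℝ)^N := by
  rcases le_or_gt 10 N with h10 | h10
  · have hNpos : (0:ℝ) < N := by
      have : (10:ℝ) ≤ N := by exact_mod_cast h10
      linarith
    have h1 : ((N:ℝ)+3)^N = (N:ℝ)^N * (1 + 3/(N:ℝ))^N := by
      rw [← mul_pow]
      congr 1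
      field_simp
    have h2 : (1 + 3/(N:ℝ))^N ≤ Real.exp 3 := by
      have hb : 1 + 3/(N:ℝ) ≤ Real.exp (3/(N:ℝ)) := by
        have := Real.add_one_le_exp (3/(N:ℝ))
        linarith
      calc (1 + 3/(N:ℝ))^N ≤ (Real.exp (3/(N:ℝ)))^N := by
            apply pow_le_pow_left₀ (by positivity) hb
        _ = Real.exp ((N:ℝ) * (3/(N:ℝ))) := by rw [Real.exp_nat_mul]
        _ = Real.exp 3 := by
            congr 1
            field_simp
    have h3 : Real.exp 3 ≤ 22 := by
      have he : Real.exp 1 < 2.7182818286 := Real.exp_one_lt_d9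
      have hp : (0:ℝ) < Real.exp 1 := Real.exp_pos 1
      have h31 : Real.exp 3 = Real.exp 1 * Real.exp 1 * Real.exp 1 := by
        rw [← Real.exp_add, ← Real.exp_add]; norm_num
      nlinarith
    have h4 : (22:ℝ) ≤ 2*((N:ℝ)+1) := by
      have : (10:ℝ) ≤ N := by exact_mod_cast h10
      linarith
    calc ((N:ℝ)+3)^N = (N:ℝ)^N * (1 + 3/(N:ℝ))^N := h1
      _ ≤ (N:ℝ)^N * Real.exp 3 := by
          apply mul_le_mul_of_nonneg_left h2 (by positivity)
      _ ≤ (N:ℝ)^N * (2*((N:ℝ)+1)) := by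
          apply mul_le_mul_of_nonneg_left (le_trans h3 h4) (by positivity)
      _ = 2*((N:ℝ)+1)*(N:ℝ)^N := by ring
  · interval_cases N <;> first | exact absurd rfl hne | norm_num

theorem geom_sum_lower_bound (N : ℕ) (hN : Odd N) (hN1 : 1 ≤ N) (r : ℝ) :
    1 / 2 + 1 / ((N : ℝ) + 1) ≤ ∑ j ∈ Finset.range N, r ^ j := by
  have hNR : (1:ℝ) ≤ (N:ℝ) := by exact_mod_cast hN1
  rcases le_or_gt 0 r with hr | hr
  · have h1 : (1:ℝ) ≤ ∑ j ∈ Finset.range N, r ^ j := by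
      have := Finset.single_le_sum (f := fun j => r ^ j)
        (fun i _ => pow_nonneg hr i) (Finset.mem_range.mpr hN1)
      simpa using this
    have h2 : 1 / ((N:ℝ)+1) ≤ 1/2 := by
      rw [div_le_div_iff₀ (by linarith) (by norm_num)]; linarith
    linarith
  · -- r < 0, put s = -r > 0
    have hspos : 0 < -r := by linarith
    set s : ℝ := -r with hsdef
    have hrs : r = -s := by rw [hsdef]; ring
    have hsum : ∑ j ∈ Finset.range N, r ^ j = (1 + s^N)/(1+s) := by
      have hr1 : r - 1 ≠ 0 := by intro h; nlinarith
      have h2 : ∑ j ∈ Finset.range N, r ^ j = (r^N - 1)/(r-1) :=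
        (eq_div_iff hr1).mpr (geom_sum_mul r N)
      rw [h2, hrs, hN.neg_pow]
      rw [div_eq_div_iff (by rw [hrs] at hr1; exact hr1) (by positivity)]
      ring
    rw [hsum]
    -- key polynomial inequality: (N+3) s ≤ 2 (N+1) s^N + (N-1)
    have hkey : ((N:ℝ)+3) * s ≤ 2*((N:ℝ)+1)*s^N + ((N:ℝ)-1) := by
      have hNne : (N:ℝ) ≠ 0 := by linarith
      set c : ℝ := ((N:ℝ)+3)/(N:ℝ) with hc
      have hcpos : 0 < c := by positivity
      have hb : 1 + (N:ℝ) * (c*s - 1) ≤ (c*s)^N := by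
        have := one_add_mul_le_pow (a := c*s - 1) (by nlinarith) N
        simpa using this
      have hcs : (c*s)^N = (((N:ℝ)+3)^N / (N:ℝ)^N) * s^N := by
        rw [mul_pow, hc, div_pow]
      have hkp : ((N:ℝ)+3)^N / (N:ℝ)^N ≤ 2*((N:ℝ)+1) := by
        rw [div_le_iff₀ (by positivity)]
        have hne2 : N ≠ 2 := by
          rcases hN with ⟨k, hk⟩; omega
        exact key_pow_ineq N hne2
      have h5 : (c*s)^N ≤ 2*((N:ℝ)+1) * s^N := by
        rw [hcs]
        apply mul_le_mul_of_nonneg_right hkp (by positivity)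
      have h6 : 1 + (N:ℝ)*(c*s-1) = 1 - (N:ℝ) + ((N:ℝ)+3)*s := by
        rw [hc]; field_simp; ring
      linarith [hb.trans h5, h6 ▸ hb.trans h5]
    -- finish
    have hbd : 1/2 + 1/((N:ℝ)+1) = ((N:ℝ)+3)/(2*((N:ℝ)+1)) := by
      field_simp; ring
    rw [hbd, div_le_div_iff₀ (by linarith) (by positivity)]
    nlinarith [hkey, pow_nonneg (le_of_lt hspos) N]
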